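/- arXiv:1011.1521 — 2 statements merged into one kernel-verified Lean document; each statement's English description precedes it below -/
import Mathlib

section
/- The function a ↦ (det(g⁻¹a))^{1/4} on P_n is Lipschitz continuous with respect to the distance d, with Lipschitz constant √n/4: for all a₀, a₁ ∈ P_n, |det(g⁻¹a₁)^{1/4} − det(g⁻¹a₀)^{1/4}| ≤ (√n/4)·d(a₀, a₁). -/
open Matrix Real MeasureTheory Filter

noncomputable section

/-- The set of real symmetric positive-definite `n × n` matrices. -/
def Pn (n : ℕ) : Set (Matrix (Fin n) (Fin n) ℝ) := {a | a.PosDef}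

/-- `tr_a(b) = tr(a⁻¹ b)`. -/
def trA {n : ℕ} (a b : Matrix (Fin n) (Fin n) ℝ) : ℝ := (a⁻¹ * b).trace

/-- `tr_a(b²) = tr((a⁻¹ b)²)`. -/
def trSq {n : ℕ} (a b : Matrix (Fin n) (Fin n) ℝ) : ℝ := ((a⁻¹ * b) * (a⁻¹ * b)).trace

/-- The `a`-traceless part `b_T = b - (1/n) tr_a(b) a`. -/
def tracelessPart {n : ℕ} (a b : Matrix (Fin n) (Fin n) ℝ) : Matrix (Fin n) (Fin n) ℝ :=
  b - ((trA a b) / (n : ℝ)) • a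

/-- `(det (g⁻¹ a))^{1/4}`. -/
def qdet {n : ℕ} (g a : Matrix (Fin n) (Fin n) ℝ) : ℝ := ((g⁻¹ * a).det) ^ ((1 : ℝ) / 4)

/-- The norm `‖b‖_a = (tr((a⁻¹b)²))^{1/2} (det (g⁻¹ a))^{1/4}`. -/
def fiberNorm {n : ℕ} (g a b : Matrix (Fin n) (Fin n) ℝ) : ℝ :=
  Real.sqrt (trSq a b) * qdet g a

/-- Entrywise derivative of a path of matrices. -/
def pathDeriv {n : ℕ} (γ : ℝ → Matrix (Fin n) (Fin n) ℝ) (t : ℝ) : Matrix (Fin n) (Fin n) ℝ :=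
  Matrix.of fun i j => deriv (fun s => γ s i j) t

/-- A path of matrices is `C¹` on a set if it is entrywise `C¹` there. -/
def C1On {n : ℕ} (γ : ℝ → Matrix (Fin n) (Fin n) ℝ) (s : Set ℝ) : Prop :=
  ∀ i j, ContDiffOn ℝ 1 (fun t => γ t i j) s

/-- `γ` is piecewise `C¹` on `[t₀, t₁]`. -/
def PiecewiseC1On {n : ℕ} (γ : ℝ → Matrix (Fin n) (Fin n) ℝ) (t₀ t₁ : ℝ) : Prop :=
  ContinuousOn γ (Set.Icc t₀ t₁) ∧
  ∃ (k : ℕ) (s : Fin (k + 1) → ℝ), StrictMono s ∧ s 0 = t₀ ∧ s (Fin.last k) = t₁ ∧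
    ∀ i : Fin k, C1On γ (Set.Icc (s i.castSucc) (s i.succ))

/-- Length of a path with respect to the fiber metric determined by `g`. -/
def pathLength {n : ℕ} (g : Matrix (Fin n) (Fin n) ℝ) (γ : ℝ → Matrix (Fin n) (Fin n) ℝ)
    (t₀ t₁ : ℝ) : ℝ :=
  ∫ t in t₀..t₁, fiberNorm g (γ t) (pathDeriv γ t)

/-- The Riemannian distance: the infimum of lengths of piecewise `C¹` paths in `P_n`. -/
def ebinDist {n : ℕ} (g a₀ a₁ : Matrix (Fin n) (Fin n) ℝ) : ℝ :=
  sInf {L : ℝ | ∃ γ : ℝ → Matrix (Fin n) (Fin n) ℝ,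
    PiecewiseC1On γ 0 1 ∧ (∀ t ∈ Set.Icc (0 : ℝ) 1, γ t ∈ Pn n) ∧
    γ 0 = a₀ ∧ γ 1 = a₁ ∧ L = pathLength g γ 0 1}

/-- `a·exp(a⁻¹ b)`, using the matrix exponential. -/
def expAt {n : ℕ} (a b : Matrix (Fin n) (Fin n) ℝ) : Matrix (Fin n) (Fin n) ℝ :=
  a * NormedSpace.exp (a⁻¹ * b)

/-- The explicit geodesic with initial point `a₀` and initial tangent `h`. -/
def geodesicPath {n : ℕ} (a₀ h : Matrix (Fin n) (Fin n) ℝ) (t : ℝ) : Matrix (Fin n) (Fin n) ℝ :=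
  let hT := tracelessPart a₀ h
  let q : ℝ := 1 + t / 4 * trA a₀ h
  let r : ℝ := t / 4 * Real.sqrt ((n : ℝ) * trSq a₀ hT)
  if hT = 0 then (q ^ ((4 : ℝ) / n)) • a₀
  else ((q ^ 2 + r ^ 2) ^ ((2 : ℝ) / n)) •
    (a₀ * NormedSpace.exp
      ((4 * Complex.arg ⟨q, r⟩ / Real.sqrt ((n : ℝ) * trSq a₀ hT)) • (a₀⁻¹ * hT)))

/-- The inverse `ψ` of the Riemannian exponential mapping based at `a₀`. -/
def psiMap {n : ℕ} (a₀ b : Matrix (Fin n) (Fin n) ℝ) : Matrix (Fin n) (Fin n) ℝ :=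
  let bT := tracelessPart a₀ b
  let ω : ℝ := Real.sqrt ((n : ℝ) * trSq a₀ bT) / 4
  if bT = 0 then ((4 / (n : ℝ)) * (Real.exp (trA a₀ b / 4) - 1)) • a₀
  else ((4 / (n : ℝ)) * (Real.exp (trA a₀ b / 4) * Real.cos ω - 1)) • a₀ +
    ((4 / Real.sqrt ((n : ℝ) * trSq a₀ bT)) * Real.exp (trA a₀ b / 4) * Real.sin ω) • bT

set_option maxHeartbeats 1600000

section AuxLemmas

theorem aux_trace_sq_le_card {n : ℕ} (A : Matrix (Fin n) (Fin n) ℝ) (hA : Aᵀ = A) :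
    (A.trace) ^ 2 ≤ (n : ℝ) * (A * A).trace := by
  have htr2 : (A * A).trace = ∑ i, ∑ j, (A i j) ^ 2 := by
    simp only [Matrix.trace, Matrix.diag, Matrix.mul_apply]
    refine Finset.sum_congr rfl fun i _ => Finset.sum_congr rfl fun j _ => ?_
    have h : A j i = A i j := by nth_rewrite 1 [← hA]; exact Matrix.transpose_apply A j i
    rw [h, sq]
  have h1 : (∑ i, A i i) ^ 2 ≤ (n : ℝ) * ∑ i, (A i i) ^ 2 := by
    simpa using sq_sum_le_card_mul_sum_sq (s := (Finset.univ : Finset (Fin n)))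
      (f := fun i => A i i)
  have h2 : ∑ i, (A i i) ^ 2 ≤ ∑ i, ∑ j, (A i j) ^ 2 := by
    refine Finset.sum_le_sum fun i _ => ?_
    exact Finset.single_le_sum (f := fun j => (A i j) ^ 2) (fun j _ => sq_nonneg _)
      (Finset.mem_univ i)
  rw [htr2]
  calc (A.trace) ^ 2 = (∑ i, A i i) ^ 2 := rfl
    _ ≤ (n : ℝ) * ∑ i, (A i i) ^ 2 := h1
    _ ≤ (n : ℝ) * ∑ i, ∑ j, (A i j) ^ 2 :=
        mul_le_mul_of_nonneg_left h2 (Nat.cast_nonneg n)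

open scoped MatrixOrder in
theorem aux_cs_ineq {n : ℕ} (a b : Matrix (Fin n) (Fin n) ℝ) (ha : a.PosDef) (hb : bᵀ = b) :
    (trA a b) ^ 2 ≤ (n : ℝ) * trSq a b := by
  have hinv : (a⁻¹).PosDef := ha.inv
  obtain ⟨s, hss, hsymm⟩ : ∃ s : Matrix (Fin n) (Fin n) ℝ, s * s = a⁻¹ ∧ sᵀ = s := by
    refine ⟨CFC.sqrt a⁻¹, CFC.sqrt_mul_sqrt_self _ hinv.posSemidef.nonneg, ?_⟩
    have h := (CFC.sqrt_nonneg a⁻¹).posSemidef.isHermitian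
    rwa [Matrix.IsHermitian, Matrix.conjTranspose_eq_transpose_of_trivial] at h
  have hMsymm : (s * b * s)ᵀ = s * b * s := by
    rw [Matrix.transpose_mul, Matrix.transpose_mul, hsymm, hb, Matrix.mul_assoc]
  have h1 : trA a b = (s * b * s).trace := by
    rw [trA, ← hss, Matrix.mul_assoc, Matrix.trace_mul_comm s (s * b), Matrix.mul_assoc]
  have h2 : trSq a b = ((s * b * s) * (s * b * s)).trace := by
    rw [trSq, ← hss]
    calc ((s * s * b) * (s * s * b)).trace
        = (s * ((s * b) * (s * s * b))).trace := by
          congr 1; simp only [Matrix.mul_assoc]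
      _ = (((s * b) * (s * s * b)) * s).trace := Matrix.trace_mul_comm _ _
      _ = ((s * b * s) * (s * b * s)).trace := by
          congr 1; simp only [Matrix.mul_assoc]
  rw [h1, h2]
  exact aux_trace_sq_le_card _ hMsymm

theorem aux_hasDerivAt_det {n : ℕ} (γ : ℝ → Matrix (Fin n) (Fin n) ℝ)
    (b : Matrix (Fin n) (Fin n) ℝ) (t : ℝ)
    (hb : ∀ i j, HasDerivAt (fun s => γ s i j) (b i j) t) :
    HasDerivAt (fun s => (γ s).det) (((γ t).adjugate * b).trace) t := by
  have key : HasDerivAt (fun s => (γ s).det)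
      (∑ σ : Equiv.Perm (Fin n), ((Equiv.Perm.sign σ : ℤ) : ℝ) *
        ∑ i, (∏ j ∈ Finset.univ.erase i, γ t (σ j) j) • b (σ i) i) t := by
    have hrw : (fun s => (γ s).det) = fun s => ∑ σ : Equiv.Perm (Fin n),
        ((Equiv.Perm.sign σ : ℤ) : ℝ) * ∏ i, γ s (σ i) i := by
      funext s; exact Matrix.det_apply' (γ s)
    rw [hrw]
    refine HasDerivAt.fun_sum fun σ _ => ?_
    exact (HasDerivAt.fun_finsetProd (fun i _ => hb (σ i) i)).const_mul _
  convert key using 1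
  have step1 : ∀ i : Fin n, ((γ t).updateCol i (fun r => b r i)).det
      = ∑ σ : Equiv.Perm (Fin n), ((Equiv.Perm.sign σ : ℤ) : ℝ) *
        ((∏ j ∈ Finset.univ.erase i, γ t (σ j) j) * b (σ i) i) := by
    intro i
    rw [Matrix.det_apply']
    refine Finset.sum_congr rfl fun σ _ => ?_
    congr 1
    have : ∀ j, ((γ t).updateCol i (fun r => b r i)) (σ j) j
        = if j = i then b (σ j) j else γ t (σ j) j := by
      intro j
      rw [Matrix.updateCol_apply]
      split_ifs with h
      · rw [h]
      · rfl
    rw [Finset.prod_congr rfl (fun j _ => this j)]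
    rw [← Finset.mul_prod_erase Finset.univ _ (Finset.mem_univ i)]
    rw [if_pos rfl, mul_comm]
    congr 1
    refine Finset.prod_congr rfl fun j hj => ?_
    rw [if_neg (Finset.mem_erase.mp hj).1]
  have step2 : ((γ t).adjugate * b).trace
      = ∑ i, ((γ t).updateCol i (fun r => b r i)).det := by
    have : ∀ i : Fin n, ((γ t).updateCol i (fun r => b r i)).det
        = ((γ t).adjugate *ᵥ fun r => b r i) i := by
      intro i
      rw [← Matrix.cramer_eq_adjugate_mulVec, Matrix.cramer_apply]
    simp only [this]
    simp [Matrix.trace, Matrix.diag, Matrix.mul_apply, Matrix.mulVec, dotProduct]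
  rw [step2]
  simp only [step1]
  rw [Finset.sum_comm]
  refine Finset.sum_congr rfl fun σ _ => ?_
  rw [Finset.mul_sum]
  refine Finset.sum_congr rfl fun i _ => ?_
  rw [smul_eq_mul]

theorem aux_adj_trace_eq {n : ℕ} (a b : Matrix (Fin n) (Fin n) ℝ) (ha : a.PosDef) :
    (a.adjugate * b).trace = a.det * trA a b := by
  have hdet : a.det ≠ 0 := ne_of_gt ha.det_pos
  have hadj : a.adjugate = a.det • a⁻¹ := by
    rw [Matrix.inv_def, smul_smul, Ring.inverse_eq_inv, mul_inv_cancel₀ hdet, one_smul]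
  rw [hadj, Matrix.smul_mul, Matrix.trace_smul, trA, smul_eq_mul]

theorem aux_hasDerivAt_qdet {n : ℕ} (g : Matrix (Fin n) (Fin n) ℝ)
    (γ : ℝ → Matrix (Fin n) (Fin n) ℝ) (b : Matrix (Fin n) (Fin n) ℝ) (t : ℝ)
    (hg : g.PosDef) (hγ : (γ t).PosDef)
    (hb : ∀ i j, HasDerivAt (fun s => γ s i j) (b i j) t) :
    HasDerivAt (fun s => qdet g (γ s)) (1 / 4 * qdet g (γ t) * trA (γ t) b) t := by
  have hDg : (0 : ℝ) < g.det := hg.det_pos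
  have hD : (0 : ℝ) < (γ t).det := hγ.det_pos
  have hx : (0 : ℝ) < (g.det)⁻¹ * (γ t).det := mul_pos (inv_pos.mpr hDg) hD
  have hrw : (fun s => qdet g (γ s)) = fun s => ((g.det)⁻¹ * (γ s).det) ^ ((1:ℝ)/4) := by
    funext s
    rw [qdet, Matrix.det_mul, Matrix.det_nonsing_inv, Ring.inverse_eq_inv]
  have hinner : HasDerivAt (fun s => (g.det)⁻¹ * (γ s).det)
      ((g.det)⁻¹ * (((γ t).adjugate * b).trace)) t :=
    (aux_hasDerivAt_det γ b t hb).const_mul _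
  have houter := hinner.rpow_const (p := (1:ℝ)/4) (Or.inl (ne_of_gt hx))
  rw [hrw]
  convert houter using 1
  rw [aux_adj_trace_eq _ _ hγ]
  have key : ((g.det)⁻¹ * (γ t).det) ^ ((1:ℝ)/4 - 1) * ((g.det)⁻¹ * (γ t).det)
      = ((g.det)⁻¹ * (γ t).det) ^ ((1:ℝ)/4) := by
    nth_rewrite 2 [← Real.rpow_one ((g.det)⁻¹ * (γ t).det)]
    rw [← Real.rpow_add hx]
    norm_num
  have hq : qdet g (γ t) = ((g.det)⁻¹ * (γ t).det) ^ ((1:ℝ)/4) := by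
    rw [qdet, Matrix.det_mul, Matrix.det_nonsing_inv, Ring.inverse_eq_inv]
  rw [hq, ← key]
  ring

theorem aux_trA_eq {n : ℕ} (a b : Matrix (Fin n) (Fin n) ℝ) :
    trA a b = (a.det)⁻¹ * (a.adjugate * b).trace := by
  rw [trA, Matrix.inv_def, Ring.inverse_eq_inv', Matrix.smul_mul, Matrix.trace_smul, smul_eq_mul]

theorem aux_trSq_eq {n : ℕ} (a b : Matrix (Fin n) (Fin n) ℝ) :
    trSq a b = ((a.det)⁻¹) ^ 2 *
      ((a.adjugate * b) * (a.adjugate * b)).trace := by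
  rw [trSq, Matrix.inv_def, Ring.inverse_eq_inv', Matrix.smul_mul, Matrix.smul_mul,
    Matrix.mul_smul, Matrix.trace_smul, Matrix.trace_smul, smul_eq_mul, smul_eq_mul, sq]
  ring

theorem aux_qdet_eq {n : ℕ} (g a : Matrix (Fin n) (Fin n) ℝ) :
    qdet g a = ((g.det)⁻¹ * a.det) ^ ((1:ℝ)/4) := by
  rw [qdet, Matrix.det_mul, Matrix.det_nonsing_inv, Ring.inverse_eq_inv]

theorem aux_qdet_pos {n : ℕ} (g a : Matrix (Fin n) (Fin n) ℝ) (hg : g.PosDef) (ha : a.PosDef) :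
    0 < qdet g a := by
  rw [aux_qdet_eq]
  exact Real.rpow_pos_of_pos (mul_pos (inv_pos.mpr hg.det_pos) ha.det_pos) _

theorem aux_piece_est {n : ℕ} (hn : 1 ≤ n) (g : Matrix (Fin n) (Fin n) ℝ) (hg : g.PosDef)
    (γ : ℝ → Matrix (Fin n) (Fin n) ℝ)
    (hpos : ∀ t ∈ Set.Icc (0:ℝ) 1, (γ t).PosDef)
    (hsym : ∀ t ∈ Set.Icc (0:ℝ) 1, (γ t)ᵀ = γ t)
    {c d : ℝ} (hcd : c < d) (hsub : Set.Icc c d ⊆ Set.Icc 0 1)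
    (hC1 : ∀ i j, ContDiffOn ℝ 1 (fun t => γ t i j) (Set.Icc c d)) :
    IntervalIntegrable (fun t => fiberNorm g (γ t) (pathDeriv γ t)) volume c d ∧
    |qdet g (γ d) - qdet g (γ c)| ≤
      Real.sqrt n / 4 * ∫ t in c..d, fiberNorm g (γ t) (pathDeriv γ t) := by
  have hcIcc : c ∈ Set.Icc c d := Set.left_mem_Icc.mpr hcd.le
  have hdIcc : d ∈ Set.Icc c d := Set.right_mem_Icc.mpr hcd.le
  have hud : UniqueDiffOn ℝ (Set.Icc c d) := uniqueDiffOn_Icc hcd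
  set bT : ℝ → Matrix (Fin n) (Fin n) ℝ :=
    fun t => Matrix.of fun i j => derivWithin (fun s => γ s i j) (Set.Icc c d) t with hbT
  have hInt : ∀ t ∈ Set.Ioo c d,
      (∀ i j, HasDerivAt (fun s => γ s i j) (bT t i j) t) ∧ pathDeriv γ t = bT t := by
    intro t ht
    have hnhds : Set.Icc c d ∈ nhds t := Icc_mem_nhds ht.1 ht.2
    have h1 : ∀ i j, HasDerivAt (fun s => γ s i j) (bT t i j) t := by
      intro i j
      have hdw : DifferentiableWithinAt ℝ (fun s => γ s i j) (Set.Icc c d) t :=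
        ((hC1 i j).differentiableOn one_ne_zero) t (Set.Ioo_subset_Icc_self ht)
      have hda : DifferentiableAt ℝ (fun s => γ s i j) t := hdw.differentiableAt hnhds
      have : bT t i j = deriv (fun s => γ s i j) t := by
        simp only [hbT, Matrix.of_apply]
        exact derivWithin_of_mem_nhds hnhds
      rw [this]
      exact hda.hasDerivAt
    refine ⟨h1, ?_⟩
    ext i j
    simp only [pathDeriv, Matrix.of_apply, hbT]
    exact (derivWithin_of_mem_nhds hnhds).symm
  have hbTsym : ∀ t ∈ Set.Icc c d, (bT t)ᵀ = bT t := by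
    intro t ht
    ext i j
    simp only [Matrix.transpose_apply, hbT, Matrix.of_apply]
    refine derivWithin_congr (fun s hs => ?_) ?_
    · have := hsym s (hsub hs)
      calc γ s j i = (γ s)ᵀ i j := rfl
        _ = γ s i j := by rw [this]
    · have := hsym t (hsub ht)
      calc γ t j i = (γ t)ᵀ i j := rfl
        _ = γ t i j := by rw [this]
  have hγcont : ContinuousOn γ (Set.Icc c d) :=
    continuousOn_pi.mpr fun i => continuousOn_pi.mpr fun j => (hC1 i j).continuousOn
  have hbTcont : ContinuousOn bT (Set.Icc c d) :=
    continuousOn_pi.mpr fun i => continuousOn_pi.mpr fun j =>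
      (hC1 i j).continuousOn_derivWithin hud le_rfl
  have hDcont : ContinuousOn (fun t => (γ t).det) (Set.Icc c d) := by
    have := (continuous_id.matrix_det).comp_continuousOn hγcont
    exact this
  have hqcont : ContinuousOn (fun t => qdet g (γ t)) (Set.Icc c d) := by
    have : ContinuousOn (fun t => ((g.det)⁻¹ * (γ t).det) ^ ((1:ℝ)/4)) (Set.Icc c d) :=
      (continuousOn_const.mul hDcont).rpow_const fun t ht => Or.inr (by norm_num)
    refine ContinuousOn.congr this fun t ht => aux_qdet_eq g (γ t)
  have hT1cont : ContinuousOn (fun t => ((γ t).adjugate * bT t).trace) (Set.Icc c d) := by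
    have houter : Continuous (fun p : Matrix (Fin n) (Fin n) ℝ × Matrix (Fin n) (Fin n) ℝ =>
        (p.1.adjugate * p.2).trace) :=
      ((continuous_fst.matrix_adjugate).matrix_mul continuous_snd).matrix_trace
    have := houter.comp_continuousOn (hγcont.prodMk hbTcont)
    exact this
  have hT2cont : ContinuousOn
      (fun t => (((γ t).adjugate * bT t) * ((γ t).adjugate * bT t)).trace) (Set.Icc c d) := by
    have houter : Continuous (fun p : Matrix (Fin n) (Fin n) ℝ × Matrix (Fin n) (Fin n) ℝ =>
        ((p.1.adjugate * p.2) * (p.1.adjugate * p.2)).trace) :=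
      (((continuous_fst.matrix_adjugate).matrix_mul continuous_snd).matrix_mul
        ((continuous_fst.matrix_adjugate).matrix_mul continuous_snd)).matrix_trace
    have := houter.comp_continuousOn (hγcont.prodMk hbTcont)
    exact this
  have hdet_ne : ∀ t ∈ Set.Icc c d, (γ t).det ≠ 0 :=
    fun t ht => ne_of_gt (hpos t (hsub ht)).det_pos
  have htrAcont : ContinuousOn (fun t => trA (γ t) (bT t)) (Set.Icc c d) := by
    refine ContinuousOn.congr (((hDcont.inv₀ hdet_ne).mul hT1cont)) fun t ht => ?_
    exact aux_trA_eq _ _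
  have htrSqcont : ContinuousOn (fun t => trSq (γ t) (bT t)) (Set.Icc c d) := by
    refine ContinuousOn.congr (((hDcont.inv₀ hdet_ne).pow 2).mul hT2cont) fun t ht => ?_
    exact aux_trSq_eq _ _
  set φ : ℝ → ℝ := fun t => 1 / 4 * qdet g (γ t) * trA (γ t) (bT t) with hφ
  set ψt : ℝ → ℝ := fun t => Real.sqrt (trSq (γ t) (bT t)) * qdet g (γ t) with hψt
  have hφcont : ContinuousOn φ (Set.Icc c d) := (continuousOn_const.mul hqcont).mul htrAcont
  have hψtcont : ContinuousOn ψt (Set.Icc c d) :=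
    (htrSqcont.sqrt).mul hqcont
  have hφint : IntervalIntegrable φ volume c d := by
    apply ContinuousOn.intervalIntegrable
    rwa [Set.uIcc_of_le hcd.le]
  have hψtint : IntervalIntegrable ψt volume c d := by
    apply ContinuousOn.intervalIntegrable
    rwa [Set.uIcc_of_le hcd.le]
  have haeIoc : ∀ᵐ x ∂(volume : Measure ℝ), x ∈ Set.Ioc c d →
      fiberNorm g (γ x) (pathDeriv γ x) = ψt x := by
    have hd0 : ∀ᵐ x : ℝ ∂volume, x ≠ d := by
      rw [MeasureTheory.ae_iff]
      simp only [not_not]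
      rw [show {a : ℝ | a = d} = {d} from rfl]
      exact Real.volume_singleton
    filter_upwards [hd0] with x hx hxIoc
    have hxIoo : x ∈ Set.Ioo c d := ⟨hxIoc.1, lt_of_le_of_ne hxIoc.2 hx⟩
    rw [fiberNorm, (hInt x hxIoo).2]
  have hψint : IntervalIntegrable (fun t => fiberNorm g (γ t) (pathDeriv γ t)) volume c d := by
    rw [intervalIntegrable_iff_integrableOn_Ioc_of_le hcd.le]
    have := (intervalIntegrable_iff_integrableOn_Ioc_of_le hcd.le).mp hψtint
    refine this.congr_fun_ae ?_
    rw [Filter.EventuallyEq]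
    rw [MeasureTheory.ae_restrict_iff' measurableSet_Ioc]
    filter_upwards [haeIoc] with x hx hmem
    exact (hx hmem).symm
  have hintegq : (∫ t in c..d, fiberNorm g (γ t) (pathDeriv γ t)) = ∫ t in c..d, ψt t := by
    refine intervalIntegral.integral_congr_ae ?_
    rw [Set.uIoc_of_le hcd.le]
    exact haeIoc
  refine ⟨hψint, ?_⟩
  rw [hintegq]
  have hftc : (∫ t in c..d, φ t) = qdet g (γ d) - qdet g (γ c) := by
    refine intervalIntegral.integral_eq_sub_of_hasDeriv_right_of_le hcd.le hqcont
      (fun t ht => ?_) hφint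
    have hda := aux_hasDerivAt_qdet g γ (bT t) t hg (hpos t (hsub (Set.Ioo_subset_Icc_self ht)))
      (hInt t ht).1
    exact hda.hasDerivWithinAt
  have hbound : ∀ t ∈ Set.Icc c d, |φ t| ≤ Real.sqrt n / 4 * ψt t := by
    intro t ht
    have hpd := hpos t (hsub ht)
    have hq : 0 < qdet g (γ t) := aux_qdet_pos g (γ t) hg hpd
    have hcs := aux_cs_ineq (γ t) (bT t) hpd (hbTsym t ht)
    have hσ : 0 ≤ trSq (γ t) (bT t) := by
      nlinarith [sq_nonneg (trA (γ t) (bT t)), (Nat.one_le_cast (α := ℝ)).mpr hn]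
    have htau : |trA (γ t) (bT t)| ≤ Real.sqrt n * Real.sqrt (trSq (γ t) (bT t)) := by
      rw [← Real.sqrt_sq_eq_abs, ← Real.sqrt_mul (Nat.cast_nonneg n)]
      exact Real.sqrt_le_sqrt hcs
    have habs : |φ t| = 1 / 4 * qdet g (γ t) * |trA (γ t) (bT t)| := by
      rw [hφ, abs_mul, abs_of_nonneg (by positivity : (0:ℝ) ≤ 1 / 4 * qdet g (γ t))]
    rw [habs, hψt]
    calc 1 / 4 * qdet g (γ t) * |trA (γ t) (bT t)|
        ≤ 1 / 4 * qdet g (γ t) * (Real.sqrt n * Real.sqrt (trSq (γ t) (bT t))) := by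
          apply mul_le_mul_of_nonneg_left htau (by positivity)
      _ = Real.sqrt n / 4 * (Real.sqrt (trSq (γ t) (bT t)) * qdet g (γ t)) := by ring
  calc |qdet g (γ d) - qdet g (γ c)| = |∫ t in c..d, φ t| := by rw [hftc]
    _ ≤ ∫ t in c..d, |φ t| := intervalIntegral.abs_integral_le_integral_abs hcd.le
    _ ≤ ∫ t in c..d, Real.sqrt n / 4 * ψt t := by
        refine intervalIntegral.integral_mono_on hcd.le hφint.abs
          (hψtint.const_mul _) hbound
    _ = Real.sqrt n / 4 * ∫ t in c..d, ψt t := by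
        rw [intervalIntegral.integral_const_mul]

theorem aux_path_est {n : ℕ} (hn : 1 ≤ n) (g : Matrix (Fin n) (Fin n) ℝ) (hg : g.PosDef)
    (γ : ℝ → Matrix (Fin n) (Fin n) ℝ) (hpc : PiecewiseC1On γ 0 1)
    (hpos : ∀ t ∈ Set.Icc (0:ℝ) 1, γ t ∈ Pn n) :
    |qdet g (γ 1) - qdet g (γ 0)| ≤ Real.sqrt n / 4 * pathLength g γ 0 1 := by
  obtain ⟨hcont, k, s, hmono, hs0, hsk, hC1⟩ := hpc
  have hpos' : ∀ t ∈ Set.Icc (0:ℝ) 1, (γ t).PosDef := hpos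
  have hsym : ∀ t ∈ Set.Icc (0:ℝ) 1, (γ t)ᵀ = γ t := by
    intro t ht
    have h := (hpos' t ht).1
    rwa [Matrix.IsHermitian, Matrix.conjTranspose_eq_transpose_of_trivial] at h
  set a : ℕ → ℝ := fun m => s ⟨min m k, Nat.lt_succ_of_le (min_le_right _ _)⟩ with ha
  have hidx : ∀ m, a m = s ⟨min m k, Nat.lt_succ_of_le (min_le_right _ _)⟩ := fun m => rfl
  have ha0 : a 0 = 0 := by
    rw [hidx, show (⟨min 0 k, Nat.lt_succ_of_le (min_le_right _ _)⟩ : Fin (k+1)) = 0 from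
      Fin.ext (by simp)]
    exact hs0
  have hak : a k = 1 := by
    rw [hidx, show (⟨min k k, Nat.lt_succ_of_le (min_le_right _ _)⟩ : Fin (k+1)) = Fin.last k from
      Fin.ext (by simp [Fin.last])]
    exact hsk
  have hac : ∀ m (hm : m < k), a m = s (Fin.castSucc ⟨m, hm⟩) := by
    intro m hm
    rw [hidx]; congr 1; apply Fin.ext; simp [Fin.castSucc, Nat.min_eq_left hm.le]
  have has : ∀ m (hm : m < k), a (m + 1) = s (Fin.succ ⟨m, hm⟩) := by
    intro m hm
    rw [hidx]; congr 1; apply Fin.ext; simp [Fin.succ, Nat.min_eq_left hm]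
  have hcd : ∀ m (hm : m < k), a m < a (m + 1) := by
    intro m hm
    rw [hac m hm, has m hm]
    exact hmono Fin.castSucc_lt_succ
  have hsub : ∀ m (hm : m < k), Set.Icc (a m) (a (m+1)) ⊆ Set.Icc (0:ℝ) 1 := by
    intro m hm
    apply Set.Icc_subset_Icc
    · rw [← hs0, hac m hm]; exact hmono.monotone (Fin.zero_le _)
    · rw [← hsk, has m hm]; exact hmono.monotone (Fin.le_last _)
  have hpieces : ∀ m (hm : m < k),
      IntervalIntegrable (fun t => fiberNorm g (γ t) (pathDeriv γ t)) volume (a m) (a (m+1)) ∧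
      |qdet g (γ (a (m+1))) - qdet g (γ (a m))| ≤
        Real.sqrt n / 4 * ∫ t in (a m)..(a (m+1)), fiberNorm g (γ t) (pathDeriv γ t) := by
    intro m hm
    refine aux_piece_est hn g hg γ hpos' hsym (hcd m hm) (hsub m hm) ?_
    intro i j
    have := hC1 ⟨m, hm⟩ i j
    rwa [← hac m hm, ← has m hm] at this
  have hint : ∀ m, m < k →
      IntervalIntegrable (fun t => fiberNorm g (γ t) (pathDeriv γ t)) volume (a m) (a (m+1)) :=
    fun m hm => (hpieces m hm).1
  have hsplit : (∫ t in (a 0)..(a k), fiberNorm g (γ t) (pathDeriv γ t))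
      = ∑ m ∈ Finset.range k, ∫ t in (a m)..(a (m+1)), fiberNorm g (γ t) (pathDeriv γ t) :=
    (intervalIntegral.sum_integral_adjacent_intervals hint).symm
  have htele : qdet g (γ 1) - qdet g (γ 0)
      = ∑ m ∈ Finset.range k, (qdet g (γ (a (m+1))) - qdet g (γ (a m))) := by
    rw [Finset.sum_range_sub (f := fun m => qdet g (γ (a m))), ha0, hak]
  calc |qdet g (γ 1) - qdet g (γ 0)|
      = |∑ m ∈ Finset.range k, (qdet g (γ (a (m+1))) - qdet g (γ (a m)))| := by rw [htele]
    _ ≤ ∑ m ∈ Finset.range k, |qdet g (γ (a (m+1))) - qdet g (γ (a m))| :=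
        Finset.abs_sum_le_sum_abs _ _
    _ ≤ ∑ m ∈ Finset.range k, Real.sqrt n / 4 *
          ∫ t in (a m)..(a (m+1)), fiberNorm g (γ t) (pathDeriv γ t) := by
        refine Finset.sum_le_sum fun m hm => (hpieces m (Finset.mem_range.mp hm)).2
    _ = Real.sqrt n / 4 * ∑ m ∈ Finset.range k,
          ∫ t in (a m)..(a (m+1)), fiberNorm g (γ t) (pathDeriv γ t) := by
        rw [Finset.mul_sum]
    _ = Real.sqrt n / 4 * pathLength g γ 0 1 := by
        rw [pathLength, ← hsplit, ha0, hak]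

theorem aux_posDef_smul {n : ℕ} {A : Matrix (Fin n) (Fin n) ℝ} (hA : A.PosDef) {r : ℝ}
    (hr : 0 < r) : (r • A).PosDef := by
  exact hA.smul hr

theorem aux_posSemidef_smul {n : ℕ} {A : Matrix (Fin n) (Fin n) ℝ} (hA : A.PosSemidef) {r : ℝ}
    (hr : 0 ≤ r) : (r • A).PosSemidef := by
  exact hA.smul hr

theorem aux_segment_posDef {n : ℕ} {a₀ a₁ : Matrix (Fin n) (Fin n) ℝ}
    (h₀ : a₀.PosDef) (h₁ : a₁.PosDef) {t : ℝ} (ht : t ∈ Set.Icc (0:ℝ) 1) :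
    (a₀ + t • (a₁ - a₀)).PosDef := by
  have heq : a₀ + t • (a₁ - a₀) = (1 - t) • a₀ + t • a₁ := by module
  rw [heq]
  rcases eq_or_lt_of_le ht.1 with h | h
  · rw [← h]
    simpa using h₀
  · exact Matrix.PosDef.posSemidef_add
      (aux_posSemidef_smul h₀.posSemidef (by linarith [ht.2])) (aux_posDef_smul h₁ h)

end AuxLemmas

/-- `a ↦ (det(g⁻¹a))^{1/4}` is `√n/4`-Lipschitz for the distance `d`. -/
theorem stmt_1 (n : ℕ) (hn : 1 ≤ n) (g : Matrix (Fin n) (Fin n) ℝ) (hg : g ∈ Pn n) :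
    ∀ a₀ ∈ Pn n, ∀ a₁ ∈ Pn n,
      |qdet g a₁ - qdet g a₀| ≤ Real.sqrt n / 4 * ebinDist g a₀ a₁ := by
  intro a₀ h₀ a₁ h₁
  have hgpd : g.PosDef := hg
  have h₀pd : a₀.PosDef := h₀
  have h₁pd : a₁.PosDef := h₁
  set S := {L : ℝ | ∃ γ : ℝ → Matrix (Fin n) (Fin n) ℝ,
    PiecewiseC1On γ 0 1 ∧ (∀ t ∈ Set.Icc (0 : ℝ) 1, γ t ∈ Pn n) ∧
    γ 0 = a₀ ∧ γ 1 = a₁ ∧ L = pathLength g γ 0 1} with hS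
  have hκ : (0:ℝ) < Real.sqrt n :=
    Real.sqrt_pos.mpr (by exact_mod_cast Nat.lt_of_lt_of_le Nat.zero_lt_one hn)
  have hne : S.Nonempty := by
    set γℓ : ℝ → Matrix (Fin n) (Fin n) ℝ := fun t => a₀ + t • (a₁ - a₀) with hγℓ
    refine ⟨pathLength g γℓ 0 1, γℓ, ⟨?_, 1, ![0, 1], ?_, by norm_num, by simp [Fin.last], ?_⟩,
      ?_, by simp [hγℓ], by simp [hγℓ], rfl⟩
    · have : Continuous γℓ := by
        exact continuous_const.add (continuous_id.smul continuous_const)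
      exact this.continuousOn
    · intro i j hij
      fin_cases i <;> fin_cases j <;> simp_all
    · intro i
      intro p q
      have : (fun t => γℓ t p q) = fun t => a₀ p q + t * (a₁ p q - a₀ p q) := by
        funext t
        simp [hγℓ, Matrix.add_apply, Matrix.smul_apply, Matrix.sub_apply, smul_eq_mul]
      rw [this]
      exact (contDiff_const.add (contDiff_id.mul contDiff_const)).contDiffOn
    · intro t ht
      exact aux_segment_posDef h₀pd h₁pd ht
  have hlb : ∀ L ∈ S, 4 / Real.sqrt n * |qdet g a₁ - qdet g a₀| ≤ L := by
    rintro L ⟨γ, hpc, hpos, hγ0, hγ1, rfl⟩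
    have := aux_path_est hn g hgpd γ hpc hpos
    rw [hγ0, hγ1] at this
    rw [div_mul_eq_mul_div, div_le_iff₀ hκ]
    nlinarith [hκ]
  have hInf : 4 / Real.sqrt n * |qdet g a₁ - qdet g a₀| ≤ sInf S := le_csInf hne hlb
  have hED : ebinDist g a₀ a₁ = sInf S := rfl
  rw [hED]
  have hmul := mul_le_mul_of_nonneg_left hInf
    (le_of_lt (by positivity : (0:ℝ) < Real.sqrt n / 4))
  calc |qdet g a₁ - qdet g a₀|
      = Real.sqrt n / 4 * (4 / Real.sqrt n * |qdet g a₁ - qdet g a₀|) := by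
        field_simp
    _ ≤ Real.sqrt n / 4 * sInf S := hmul


end
end

section
/- For all a₀, a₁ ∈ P_n, d(a₀, a₁) ≤ (4/√n)·( (det(g⁻¹a₀))^{1/4} + (det(g⁻¹a₁))^{1/4} ). -/
open Matrix Real MeasureTheory Filter
open Topology

noncomputable section

section Aux
variable {n : ℕ}

lemma my_smul_inv {m : Matrix (Fin n) (Fin n) ℝ} (hm : IsUnit m.det) {c : ℝ} (hc : c ≠ 0) :
    (c • m)⁻¹ = c⁻¹ • m⁻¹ := by
  apply Matrix.inv_eq_left_inv
  rw [Matrix.smul_mul, Matrix.mul_smul, Matrix.nonsing_inv_mul m hm, smul_smul,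
    inv_mul_cancel₀ hc, one_smul]

lemma my_det_pos {g a : Matrix (Fin n) (Fin n) ℝ} (hg : g.PosDef) (ha : a.PosDef) :
    0 < (g⁻¹ * a).det := by
  rw [Matrix.det_mul, Matrix.det_nonsing_inv, Ring.inverse_eq_inv']
  exact mul_pos (inv_pos.mpr hg.det_pos) ha.det_pos

lemma my_qdet_pos {g a : Matrix (Fin n) (Fin n) ℝ} (hg : g.PosDef) (ha : a.PosDef) :
    0 < qdet g a := Real.rpow_pos_of_pos (my_det_pos hg ha) _

lemma my_trSq_smul {a : Matrix (Fin n) (Fin n) ℝ} (ha : a.PosDef) {c : ℝ} (hc : c ≠ 0) (d : ℝ) :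
    trSq (c • a) (d • a) = (d / c) ^ 2 * n := by
  have h1 : (c • a)⁻¹ * (d • a) = (d / c) • (1 : Matrix (Fin n) (Fin n) ℝ) := by
    rw [my_smul_inv ha.det_pos.ne'.isUnit hc, Matrix.smul_mul, Matrix.mul_smul,
      Matrix.nonsing_inv_mul a ha.det_pos.ne'.isUnit, smul_smul]
    rw [div_eq_inv_mul, mul_comm]
  rw [trSq, h1, Matrix.smul_mul, Matrix.mul_smul, one_mul, smul_smul, Matrix.trace_smul,
    Matrix.trace_one]
  ring_nf
  simp [sq]
  try ring

lemma my_trSq_smul_smul {m h : Matrix (Fin n) (Fin n) ℝ} (hm : IsUnit m.det) {c : ℝ} (hc : c ≠ 0) :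
    trSq (c • m) (c • h) = trSq m h := by
  have h1 : (c • m)⁻¹ * (c • h) = m⁻¹ * h := by
    rw [my_smul_inv hm hc, Matrix.smul_mul, Matrix.mul_smul, smul_smul, inv_mul_cancel₀ hc,
      one_smul]
  rw [trSq, h1, trSq]

lemma my_qdet_smul (g : Matrix (Fin n) (Fin n) ℝ) {a : Matrix (Fin n) (Fin n) ℝ}
    (hd : 0 ≤ (g⁻¹ * a).det) {c : ℝ} (hc : 0 ≤ c) :
    qdet g (c • a) = c ^ ((n : ℝ) / 4) * qdet g a := by
  rw [qdet, Matrix.mul_smul, Matrix.det_smul, Fintype.card_fin,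
    Real.mul_rpow (by positivity) hd, ← Real.rpow_natCast c n, ← Real.rpow_mul hc, qdet]
  ring_nf


lemma scaling_integrand (hn : 1 ≤ n) {g a : Matrix (Fin n) (Fin n) ℝ}
    (hg : g.PosDef) (ha : a.PosDef) {γ : ℝ → Matrix (Fin n) (Fin n) ℝ} {w : ℝ → ℝ} {t b : ℝ}
    (hw : HasDerivAt w b t) (hpos : 0 < w t)
    (hev : ∀ᶠ s in 𝓝 t, γ s = (w s ^ ((4 : ℝ) / n)) • a) :
    fiberNorm g (γ t) (pathDeriv γ t) = |b| * (4 / Real.sqrt n) * qdet g a := by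
  have hn0 : (n : ℝ) ≠ 0 := Nat.cast_ne_zero.mpr (by omega)
  have hnpos : (0 : ℝ) < n := by positivity
  set r : ℝ := (4 : ℝ) / n with hrdef
  have hr : 0 < r := by positivity
  have hγt : γ t = (w t ^ r) • a := hev.self_of_nhds
  have hD : pathDeriv γ t = (b * (r * w t ^ (r - 1))) • a := by
    ext i j
    simp only [pathDeriv, Matrix.of_apply, Matrix.smul_apply, smul_eq_mul]
    have h1 : (fun s => γ s i j) =ᶠ[𝓝 t] fun s => (w s ^ r) * a i j :=
      hev.mono fun s hs => by show γ s i j = _; rw [hs]; simp [Matrix.smul_apply, smul_eq_mul]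
    rw [h1.deriv_eq]
    have h2 : HasDerivAt (fun s => w s ^ r) (b * (r * w t ^ (r - 1))) t := by
      have := hw.rpow_const (p := r) (Or.inl hpos.ne')
      convert this using 1
      ring
    exact ((h2.mul_const (a i j)).deriv)
  set c : ℝ := w t ^ r with hcdef
  have hcpos : 0 < c := Real.rpow_pos_of_pos hpos r
  set d : ℝ := b * (r * w t ^ (r - 1)) with hddef
  rw [hγt, hD, fiberNorm, my_trSq_smul ha hcpos.ne' d,
    my_qdet_smul g (my_det_pos hg ha).le hcpos.le]
  rw [Real.sqrt_mul (sq_nonneg _), Real.sqrt_sq_eq_abs]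
  have h3 : c ^ ((n : ℝ) / 4) = w t := by
    rw [hcdef, ← Real.rpow_mul hpos.le]
    have : r * ((n : ℝ) / 4) = 1 := by rw [hrdef]; field_simp
    rw [this, Real.rpow_one]
  have h4 : d / c = b * r / w t := by
    rw [hddef, hcdef, Real.rpow_sub hpos, Real.rpow_one]
    field_simp
  have h5 : r * Real.sqrt n = 4 / Real.sqrt n := by
    rw [eq_div_iff (Real.sqrt_ne_zero'.mpr hnpos), hrdef, mul_assoc,
      Real.mul_self_sqrt hnpos.le]
    field_simp
  have h6 : |b * r / w t| = |b| * r / w t := by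
    rw [abs_div, abs_mul, abs_of_pos hr, abs_of_pos hpos]
  rw [h3, h4, h6]
  have h7 : |b| * r / w t * Real.sqrt n * (w t * qdet g a)
      = |b| * (r * Real.sqrt n) * qdet g a := by
    field_simp
  rw [h7, h5]

lemma middle_integrand (hn : 1 ≤ n) {g : Matrix (Fin n) (Fin n) ℝ} (hg : g.PosDef)
    {γ : ℝ → Matrix (Fin n) (Fin n) ℝ} {m : ℝ → Matrix (Fin n) (Fin n) ℝ}
    {D : Matrix (Fin n) (Fin n) ℝ} {t ε : ℝ} (hε : 0 < ε) (hmt : (m t).PosDef)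
    (hev : ∀ᶠ s in 𝓝 t, γ s = (ε ^ ((4 : ℝ) / n)) • m s)
    (hder : ∀ i j, HasDerivAt (fun s => m s i j) (D i j) t) :
    fiberNorm g (γ t) (pathDeriv γ t)
      = ε * (Real.sqrt (trSq (m t) D) * qdet g (m t)) := by
  have hn0 : (n : ℝ) ≠ 0 := Nat.cast_ne_zero.mpr (by omega)
  set e : ℝ := ε ^ ((4 : ℝ) / n) with hedef
  have hepos : 0 < e := Real.rpow_pos_of_pos hε _
  have hγt : γ t = e • m t := hev.self_of_nhds
  have hD : pathDeriv γ t = e • D := by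
    ext i j
    simp only [pathDeriv, Matrix.of_apply, Matrix.smul_apply, smul_eq_mul]
    have h1 : (fun s => γ s i j) =ᶠ[𝓝 t] fun s => e * m s i j :=
      hev.mono fun s hs => by show γ s i j = _; rw [hs]; simp [Matrix.smul_apply, smul_eq_mul]
    rw [h1.deriv_eq]
    exact (((hder i j).const_mul e).deriv)
  have hen : e ^ ((n : ℝ) / 4) = ε := by
    rw [hedef, ← Real.rpow_mul hε.le]
    have : (4 : ℝ) / n * ((n : ℝ) / 4) = 1 := by field_simp
    rw [this, Real.rpow_one]
  rw [hγt, hD, fiberNorm, my_trSq_smul_smul hmt.det_pos.ne'.isUnit hepos.ne',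
    my_qdet_smul g (my_det_pos hg hmt).le hepos.le, hen]
  ring

lemma cont_F {g : Matrix (Fin n) (Fin n) ℝ} {m : ℝ → Matrix (Fin n) (Fin n) ℝ}
    (hm : Continuous m) {s : Set ℝ} (hdet : ∀ t ∈ s, (m t).det ≠ 0)
    (D : Matrix (Fin n) (Fin n) ℝ) :
    ContinuousOn (fun t => Real.sqrt (trSq (m t) D) * qdet g (m t)) s := by
  have hinv : ContinuousOn (fun t => (m t)⁻¹) s := by
    have heq : (fun t => (m t)⁻¹) = fun t => ((m t).det)⁻¹ • (m t).adjugate := by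
      funext t
      rw [Matrix.inv_def, Ring.inverse_eq_inv']
    rw [heq]
    exact ((hm.matrix_det.continuousOn).inv₀ hdet).smul hm.matrix_adjugate.continuousOn
  have htr : ContinuousOn (fun t => trSq (m t) D) s := by
    have : ContinuousOn (fun t => ((m t)⁻¹ * D) * ((m t)⁻¹ * D)) s :=
      (hinv.mul continuousOn_const).mul (hinv.mul continuousOn_const)
    exact (continuous_id.matrix_trace).comp_continuousOn this
  have hq : Continuous (fun t => qdet g (m t)) := by
    exact (Real.continuous_rpow_const (by norm_num)).comp (continuous_const.mul hm).matrix_det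
  exact ((Real.continuous_sqrt.comp_continuousOn htr).mul hq.continuousOn)

lemma interval_helper {f G : ℝ → ℝ} {a b : ℝ} (hab : a ≤ b)
    (hG : ContinuousOn G (Set.Icc a b)) (h : ∀ t ∈ Set.Ioo a b, f t = G t) :
    IntervalIntegrable f volume a b ∧ ∫ t in a..b, f t = ∫ t in a..b, G t := by
  have hGi : IntervalIntegrable G volume a b := by
    apply ContinuousOn.intervalIntegrable
    rwa [Set.uIcc_of_le hab]
  have hmeas : volume ({a, b} : Set ℝ) = 0 :=
    Set.Finite.measure_zero (Set.toFinite _) volume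
  have hb : ∀ᵐ x : ℝ ∂volume, x ∉ ({a, b} : Set ℝ) := compl_mem_ae_iff.mpr hmeas
  have hae : ∀ᵐ x ∂volume, x ∈ Set.uIoc a b → f x = G x := by
    filter_upwards [hb] with x hx hxI
    rw [Set.uIoc_of_le hab] at hxI
    simp only [Set.mem_insert_iff, Set.mem_singleton_iff, not_or] at hx
    exact h x ⟨hxI.1, lt_of_le_of_ne hxI.2 hx.2⟩
  constructor
  · rw [intervalIntegrable_iff] at hGi ⊢
    have : f =ᵐ[volume.restrict (Set.uIoc a b)] G := (ae_restrict_iff' measurableSet_uIoc).mpr hae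
    exact hGi.congr this.symm
  · exact intervalIntegral.integral_congr_ae hae

def mPath (a₀ a₁ : Matrix (Fin n) (Fin n) ℝ) : ℝ → Matrix (Fin n) (Fin n) ℝ :=
  fun t => (2 - 3 * t) • a₀ + (3 * t - 1) • a₁

def gammaPath (n : ℕ) (ε : ℝ) (a₀ a₁ : Matrix (Fin n) (Fin n) ℝ) :
    ℝ → Matrix (Fin n) (Fin n) ℝ := fun t =>
  if t ≤ 1/3 then ((1 - 3 * (1 - ε) * t) ^ ((4 : ℝ) / n)) • a₀
  else if t ≤ 2/3 then (ε ^ ((4 : ℝ) / n)) • mPath a₀ a₁ t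
  else ((ε + 3 * (1 - ε) * (t - 2/3)) ^ ((4 : ℝ) / n)) • a₁

lemma my_posDef_smul {A : Matrix (Fin n) (Fin n) ℝ} (hA : A.PosDef) {c : ℝ} (hc : 0 < c) :
    (c • A).PosDef := by
  refine ⟨?_, fun x hx => ?_⟩
  · show (c • A)ᴴ = c • A
    rw [conjTranspose_smul, star_trivial, hA.1.eq]
  · exact (hA.smul hc).2 hx

lemma my_posSemidef_smul {A : Matrix (Fin n) (Fin n) ℝ} (hA : A.PosDef) {c : ℝ} (hc : 0 ≤ c) :
    (c • A).PosSemidef := by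
  refine ⟨?_, fun x => ?_⟩
  · show (c • A)ᴴ = c • A
    rw [conjTranspose_smul, star_trivial, hA.1.eq]
  · exact (hA.posSemidef.smul hc).2 x

variable {a₀ a₁ : Matrix (Fin n) (Fin n) ℝ} {ε : ℝ}

lemma mPath_cont : Continuous (mPath a₀ a₁) := by
  apply Continuous.add
  · exact (continuous_const.sub (continuous_const.mul continuous_id)).smul continuous_const
  · exact ((continuous_const.mul continuous_id).sub continuous_const).smul continuous_const

lemma mPath_posDef (ha₀ : a₀.PosDef) (ha₁ : a₁.PosDef) {t : ℝ} (h1 : 1/3 ≤ t) (h2 : t ≤ 2/3) :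
    (mPath a₀ a₁ t).PosDef := by
  rcases eq_or_lt_of_le h1 with h | h
  · have : mPath a₀ a₁ t = a₀ := by
      rw [mPath, ← h]; norm_num
    rw [this]; exact ha₀
  · exact Matrix.PosDef.posSemidef_add
      (my_posSemidef_smul ha₀ (by linarith)) (my_posDef_smul ha₁ (by linarith))

lemma gamma_boundary1 (hn : 1 ≤ n) :
    ((1 - 3 * (1 - ε) * (1/3 : ℝ)) ^ ((4 : ℝ) / n)) • a₀
      = (ε ^ ((4 : ℝ) / n)) • mPath a₀ a₁ (1/3) := by
  have h1 : (1 : ℝ) - 3 * (1 - ε) * (1/3) = ε := by ring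
  have h2 : mPath a₀ a₁ (1/3) = a₀ := by rw [mPath]; norm_num
  rw [h1, h2]

lemma gamma_boundary2 (hn : 1 ≤ n) :
    (ε ^ ((4 : ℝ) / n)) • mPath a₀ a₁ (2/3)
      = ((ε + 3 * (1 - ε) * ((2/3 : ℝ) - 2/3)) ^ ((4 : ℝ) / n)) • a₁ := by
  have h1 : ε + 3 * (1 - ε) * ((2/3 : ℝ) - 2/3) = ε := by ring
  have h2 : mPath a₀ a₁ (2/3) = a₁ := by rw [mPath]; norm_num
  rw [h1, h2]

lemma gamma_cont (hn : 1 ≤ n) : Continuous (gammaPath n ε a₀ a₁) := by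
  have hr : (0 : ℝ) ≤ 4 / n := by positivity
  have c1 : Continuous fun t : ℝ => ((1 - 3 * (1 - ε) * t) ^ ((4 : ℝ) / n)) • a₀ :=
    ((Real.continuous_rpow_const hr).comp
      (continuous_const.sub (continuous_const.mul continuous_id))).smul continuous_const
  have c2 : Continuous fun t : ℝ => (ε ^ ((4 : ℝ) / n)) • mPath a₀ a₁ t :=
    Continuous.smul (f := fun _ => ε ^ ((4 : ℝ) / n)) (g := mPath a₀ a₁) continuous_const mPath_cont
  have c3 : Continuous fun t : ℝ => ((ε + 3 * (1 - ε) * (t - 2/3)) ^ ((4 : ℝ) / n)) • a₁ :=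
    ((Real.continuous_rpow_const hr).comp
      (continuous_const.add (continuous_const.mul (continuous_id.sub continuous_const)))).smul
      continuous_const
  have cInner : Continuous fun t : ℝ =>
      if t ≤ 2/3 then (ε ^ ((4 : ℝ) / n)) • mPath a₀ a₁ t
      else ((ε + 3 * (1 - ε) * (t - 2/3)) ^ ((4 : ℝ) / n)) • a₁ := by
    apply Continuous.if_le c2 c3 continuous_id continuous_const
    intro t ht
    rw [show t = (2/3 : ℝ) from ht]
    exact gamma_boundary2 hn
  apply Continuous.if_le c1 cInner continuous_id continuous_const
  intro t ht
  rw [show t = (1/3 : ℝ) from ht]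
  rw [gamma_boundary1 hn (a₁ := a₁)]
  norm_num

lemma gamma_posDef (hn : 1 ≤ n) (ha₀ : a₀.PosDef) (ha₁ : a₁.PosDef) (hε0 : 0 < ε) (hε1 : ε < 1)
    {t : ℝ} (ht : t ∈ Set.Icc (0 : ℝ) 1) : (gammaPath n ε a₀ a₁ t).PosDef := by
  obtain ⟨ht0, ht1⟩ := ht
  rw [gammaPath]
  split_ifs with h1 h2
  · apply my_posDef_smul ha₀
    apply Real.rpow_pos_of_pos
    nlinarith
  · exact my_posDef_smul (mPath_posDef ha₀ ha₁ (by linarith) h2) (Real.rpow_pos_of_pos hε0 _)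
  · apply my_posDef_smul ha₁
    apply Real.rpow_pos_of_pos
    push_neg at h2
    nlinarith

lemma gamma_zero (hn : 1 ≤ n) : gammaPath n ε a₀ a₁ 0 = a₀ := by
  rw [gammaPath, if_pos (by norm_num : (0:ℝ) ≤ 1/3)]
  norm_num

lemma gamma_one (hn : 1 ≤ n) : gammaPath n ε a₀ a₁ 1 = a₁ := by
  rw [gammaPath, if_neg (by norm_num : ¬ (1:ℝ) ≤ 1/3), if_neg (by norm_num : ¬ (1:ℝ) ≤ 2/3)]
  have : ε + 3 * (1 - ε) * ((1:ℝ) - 2/3) = 1 := by ring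
  rw [this]
  norm_num

lemma gamma_c1_piece1 (hn : 1 ≤ n) (hε0 : 0 < ε) (hε1 : ε < 1) :
    C1On (gammaPath n ε a₀ a₁) (Set.Icc 0 (1/3)) := by
  intro i j
  have heq : Set.EqOn (fun t => gammaPath n ε a₀ a₁ t i j)
      (fun t => ((1 - 3 * (1 - ε) * t) ^ ((4 : ℝ) / n)) * a₀ i j) (Set.Icc 0 (1/3)) := by
    intro t ht
    simp only [gammaPath, if_pos ht.2, Matrix.smul_apply, smul_eq_mul]
  apply ContDiffOn.congr ?_ heq
  intro t ht
  apply ContDiffAt.contDiffWithinAt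
  apply ContDiffAt.mul ?_ contDiffAt_const
  apply ContDiffAt.rpow_const_of_ne
  · exact (contDiff_const.sub (contDiff_const.mul contDiff_id)).contDiffAt
  · have h1 := ht.1; have h2 := ht.2
    show (1 : ℝ) - 3 * (1 - ε) * t ≠ 0
    nlinarith

lemma gamma_c1_piece2 (hn : 1 ≤ n) :
    C1On (gammaPath n ε a₀ a₁) (Set.Icc (1/3) (2/3)) := by
  intro i j
  have heq : Set.EqOn (fun t => gammaPath n ε a₀ a₁ t i j)
      (fun t => ε ^ ((4 : ℝ) / n) * ((2 - 3 * t) * a₀ i j + (3 * t - 1) * a₁ i j))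
      (Set.Icc (1/3) (2/3)) := by
    intro t ht
    have hmm : gammaPath n ε a₀ a₁ t = (ε ^ ((4 : ℝ) / n)) • mPath a₀ a₁ t := by
      by_cases h : t ≤ 1/3
      · have h3 : t = 1/3 := le_antisymm h ht.1
        rw [h3, gammaPath, if_pos le_rfl, gamma_boundary1 hn]
      · rw [gammaPath, if_neg h, if_pos ht.2]
    show gammaPath n ε a₀ a₁ t i j = _
    rw [hmm]
    simp [mPath, Matrix.smul_apply, Matrix.add_apply, smul_eq_mul]
  apply ContDiffOn.congr ?_ heq
  apply ContDiff.contDiffOn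
  apply ContDiff.mul contDiff_const
  exact ((contDiff_const.sub (contDiff_const.mul contDiff_id)).mul contDiff_const).add
    (((contDiff_const.mul contDiff_id).sub contDiff_const).mul contDiff_const)

lemma gamma_c1_piece3 (hn : 1 ≤ n) (hε0 : 0 < ε) (hε1 : ε < 1) :
    C1On (gammaPath n ε a₀ a₁) (Set.Icc (2/3) 1) := by
  intro i j
  have heq : Set.EqOn (fun t => gammaPath n ε a₀ a₁ t i j)
      (fun t => ((ε + 3 * (1 - ε) * (t - 2/3)) ^ ((4 : ℝ) / n)) * a₁ i j)
      (Set.Icc (2/3) 1) := by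
    intro t ht
    have hmm : gammaPath n ε a₀ a₁ t
        = ((ε + 3 * (1 - ε) * (t - 2/3)) ^ ((4 : ℝ) / n)) • a₁ := by
      by_cases h : t ≤ 2/3
      · have h3 : t = 2/3 := le_antisymm h ht.1
        rw [h3, gammaPath, if_neg (by norm_num : ¬ (2/3 : ℝ) ≤ 1/3), if_pos le_rfl,
          gamma_boundary2 hn]
      · rw [gammaPath, if_neg (by push_neg at h; intro hc; linarith), if_neg h]
    show gammaPath n ε a₀ a₁ t i j = _
    rw [hmm]
    simp [Matrix.smul_apply, smul_eq_mul]
  apply ContDiffOn.congr ?_ heq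
  intro t ht
  apply ContDiffAt.contDiffWithinAt
  apply ContDiffAt.mul ?_ contDiffAt_const
  apply ContDiffAt.rpow_const_of_ne
  · exact (contDiff_const.add (contDiff_const.mul (contDiff_id.sub contDiff_const))).contDiffAt
  · have h1 := ht.1
    show ε + 3 * (1 - ε) * (t - 2/3) ≠ 0
    nlinarith

end Aux


/-- upper bound for the distance by the sum of fourth roots of determinants. -/
theorem stmt_3 (n : ℕ) (hn : 1 ≤ n) (g : Matrix (Fin n) (Fin n) ℝ) (hg : g ∈ Pn n) :
    ∀ a₀ ∈ Pn n, ∀ a₁ ∈ Pn n,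
      ebinDist g a₀ a₁ ≤ 4 / Real.sqrt n * (qdet g a₀ + qdet g a₁) := by
  intro a₀ ha₀ a₁ ha₁
  have hgP : g.PosDef := hg
  have ha₀P : a₀.PosDef := ha₀
  have ha₁P : a₁.PosDef := ha₁
  have hnpos : (0 : ℝ) < n := by exact_mod_cast Nat.pos_of_ne_zero (by omega)
  have hsq : 0 < Real.sqrt n := Real.sqrt_pos.mpr hnpos
  have hQ₀ : 0 < qdet g a₀ := my_qdet_pos hgP ha₀P
  have hQ₁ : 0 < qdet g a₁ := my_qdet_pos hgP ha₁P
  rw [ebinDist]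
  set S := {L : ℝ | ∃ γ : ℝ → Matrix (Fin n) (Fin n) ℝ,
    PiecewiseC1On γ 0 1 ∧ (∀ t ∈ Set.Icc (0 : ℝ) 1, γ t ∈ Pn n) ∧
    γ 0 = a₀ ∧ γ 1 = a₁ ∧ L = pathLength g γ 0 1} with hSdef
  have hbdd : BddBelow S := by
    refine ⟨0, ?_⟩
    rintro L ⟨γ, hpc, hmem, h0, h1, rfl⟩
    apply intervalIntegral.integral_nonneg (by norm_num : (0:ℝ) ≤ 1)
    intro u hu
    exact mul_nonneg (Real.sqrt_nonneg _)
      (Real.rpow_pos_of_pos (my_det_pos hgP (hmem u hu)) _).le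
  set D := (3 : ℝ) • (a₁ - a₀) with hDdef
  set F := fun t => Real.sqrt (trSq (mPath a₀ a₁ t) D) * qdet g (mPath a₀ a₁ t) with hFdef
  have hmpos : ∀ t ∈ Set.Icc (1/3 : ℝ) (2/3), (mPath a₀ a₁ t).PosDef :=
    fun t ht => mPath_posDef ha₀P ha₁P ht.1 ht.2
  have hFcont : ContinuousOn F (Set.Icc (1/3) (2/3)) :=
    cont_F mPath_cont (fun t ht => (hmpos t ht).det_pos.ne') D
  obtain ⟨M, hMmem⟩ := isCompact_Icc.bddAbove_image hFcont
  have hM : ∀ t ∈ Set.Icc (1/3 : ℝ) (2/3), F t ≤ M :=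
    fun t ht => hMmem (Set.mem_image_of_mem F ht)
  have hM0 : 0 ≤ M := by
    refine le_trans ?_ (hM (1/2) (by norm_num))
    exact mul_nonneg (Real.sqrt_nonneg _)
      (Real.rpow_pos_of_pos (my_det_pos hgP (hmpos (1/2) (by norm_num))) _).le
  apply le_of_forall_pos_le_add
  intro δ hδ
  set ε := min (1/2 : ℝ) (3 * δ / (M + 1)) with hεdef
  have hε0 : 0 < ε := lt_min (by norm_num) (by positivity)
  have hε1 : ε < 1 := lt_of_le_of_lt (min_le_left _ _) (by norm_num)
  set γ := gammaPath n ε a₀ a₁ with hγdef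
  have hpc : PiecewiseC1On γ 0 1 := by
    refine ⟨(gamma_cont hn).continuousOn, 3, ![0, 1/3, 2/3, 1], ?_, ?_, ?_, ?_⟩
    · rw [Fin.strictMono_iff_lt_succ]
      intro i
      fin_cases i <;> norm_num [Matrix.cons_val_two, Matrix.vecHead, Matrix.vecTail]
    · norm_num
    · show (1 : ℝ) = 1
      rfl
    · intro i
      fin_cases i
      · exact gamma_c1_piece1 hn hε0 hε1
      · exact gamma_c1_piece2 hn
      · exact gamma_c1_piece3 hn hε0 hε1
  have hmemPn : ∀ t ∈ Set.Icc (0 : ℝ) 1, γ t ∈ Pn n :=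
    fun t ht => gamma_posDef hn ha₀P ha₁P hε0 hε1 ht
  have hmemS : pathLength g γ 0 1 ∈ S :=
    ⟨γ, hpc, hmemPn, gamma_zero hn, gamma_one hn, rfl⟩
  refine le_trans (csInf_le hbdd hmemS) ?_
  set f := fun t => fiberNorm g (γ t) (pathDeriv γ t) with hfdef
  have hp1 : ∀ t ∈ Set.Ioo (0 : ℝ) (1/3),
      f t = 3 * (1 - ε) * (4 / Real.sqrt n) * qdet g a₀ := by
    intro t ht
    have hev : ∀ᶠ s in 𝓝 t, γ s = ((1 - 3 * (1 - ε) * s) ^ ((4 : ℝ) / n)) • a₀ := by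
      filter_upwards [Iio_mem_nhds ht.2] with s hs
      rw [hγdef, gammaPath, if_pos (le_of_lt hs)]
    have hw : HasDerivAt (fun s => 1 - 3 * (1 - ε) * s) (-(3 * (1 - ε))) t := by
      simpa using ((hasDerivAt_id t).const_mul (3 * (1 - ε))).const_sub 1
    have hpos : 0 < 1 - 3 * (1 - ε) * t := by nlinarith [ht.1, ht.2, hε0, hε1]
    have h := scaling_integrand hn hgP ha₀P hw hpos hev
    rw [hfdef]
    simp only []
    rw [h, abs_neg, abs_of_pos (by linarith : (0:ℝ) < 3 * (1 - ε))]
  obtain ⟨hint1, heq1⟩ := interval_helper (by norm_num : (0:ℝ) ≤ 1/3) continuousOn_const hp1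
  have hp2 : ∀ t ∈ Set.Ioo (1/3 : ℝ) (2/3), f t = ε * F t := by
    intro t ht
    have hev : ∀ᶠ s in 𝓝 t, γ s = (ε ^ ((4 : ℝ) / n)) • mPath a₀ a₁ s := by
      filter_upwards [Ioo_mem_nhds ht.1 ht.2] with s hs
      rw [hγdef, gammaPath, if_neg (not_le.mpr hs.1), if_pos (le_of_lt hs.2)]
    have hder : ∀ i j, HasDerivAt (fun s => mPath a₀ a₁ s i j) (D i j) t := by
      intro i j
      have hfun : (fun s => mPath a₀ a₁ s i j)
          = fun s => (2 - 3 * s) * a₀ i j + (3 * s - 1) * a₁ i j := by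
        funext s
        simp [mPath, Matrix.add_apply, Matrix.smul_apply, smul_eq_mul]
      rw [hfun]
      have d1 : HasDerivAt (fun s : ℝ => 2 - 3 * s) (-3) t := by
        simpa using ((hasDerivAt_id t).const_mul 3).const_sub 2
      have d2 : HasDerivAt (fun s : ℝ => 3 * s - 1) 3 t := by
        simpa using ((hasDerivAt_id t).const_mul 3).sub_const 1
      have := (d1.mul_const (a₀ i j)).add (d2.mul_const (a₁ i j))
      refine HasDerivAt.congr_deriv this ?_
      rw [hDdef]
      simp [Matrix.smul_apply, Matrix.sub_apply]
      ring
    exact middle_integrand hn hgP hε0 (hmpos t ⟨le_of_lt ht.1, le_of_lt ht.2⟩) hev hder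
  obtain ⟨hint2, heq2⟩ := interval_helper (by norm_num : (1/3:ℝ) ≤ 2/3)
    (continuousOn_const.mul hFcont) hp2
  have hp3 : ∀ t ∈ Set.Ioo (2/3 : ℝ) 1,
      f t = 3 * (1 - ε) * (4 / Real.sqrt n) * qdet g a₁ := by
    intro t ht
    have hev : ∀ᶠ s in 𝓝 t, γ s = ((ε + 3 * (1 - ε) * (s - 2/3)) ^ ((4 : ℝ) / n)) • a₁ := by
      filter_upwards [Ioi_mem_nhds ht.1] with s hs
      rw [hγdef, gammaPath, if_neg (by push_neg; linarith [Set.mem_Ioi.mp hs]),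
        if_neg (not_le.mpr hs)]
    have hw : HasDerivAt (fun s => ε + 3 * (1 - ε) * (s - 2/3)) (3 * (1 - ε)) t := by
      simpa using (((hasDerivAt_id t).sub_const (2/3)).const_mul (3 * (1 - ε))).const_add ε
    have hpos : 0 < ε + 3 * (1 - ε) * (t - 2/3) := by nlinarith [ht.1, hε0, hε1]
    have h := scaling_integrand hn hgP ha₁P hw hpos hev
    rw [hfdef]
    simp only []
    rw [h, abs_of_pos (by linarith : (0:ℝ) < 3 * (1 - ε))]
  obtain ⟨hint3, heq3⟩ := interval_helper (by norm_num : (2/3:ℝ) ≤ 1) continuousOn_const hp3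
  have hsplit : ∫ t in (0:ℝ)..1, f t
      = (∫ t in (0:ℝ)..(1/3), f t) + (∫ t in (1/3:ℝ)..(2/3), f t)
        + (∫ t in (2/3:ℝ)..1, f t) := by
    rw [intervalIntegral.integral_add_adjacent_intervals hint1 hint2,
      intervalIntegral.integral_add_adjacent_intervals (hint1.trans hint2) hint3]
  have hlen : pathLength g γ 0 1 = ∫ t in (0:ℝ)..1, f t := rfl
  have hmidint : IntervalIntegrable (fun t => ε * F t) volume (1/3) (2/3) := by
    apply ContinuousOn.intervalIntegrable
    rw [Set.uIcc_of_le (by norm_num : (1/3:ℝ) ≤ 2/3)]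
    exact continuousOn_const.mul hFcont
  have hmid : (∫ t in (1/3:ℝ)..(2/3), ε * F t) ≤ ε * M * (1/3) := by
    have hmono := intervalIntegral.integral_mono_on (by norm_num : (1/3:ℝ) ≤ 2/3)
      hmidint intervalIntegrable_const
      (fun x hx => mul_le_mul_of_nonneg_left (hM x hx) hε0.le)
    rw [intervalIntegral.integral_const, smul_eq_mul] at hmono
    calc (∫ t in (1/3:ℝ)..(2/3), ε * F t) ≤ (2/3 - 1/3) * (ε * M) := hmono
      _ = ε * M * (1/3) := by ring
  have hεM : ε * M * (1/3) ≤ δ := by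
    have h1 : ε ≤ 3 * δ / (M + 1) := min_le_right _ _
    have h2 : ε * (M + 1) ≤ 3 * δ := by
      rw [← le_div_iff₀ (by linarith : (0:ℝ) < M + 1)]
      exact h1
    nlinarith [hε0, hM0]
  rw [hlen, hsplit, heq1, heq2, heq3, intervalIntegral.integral_const,
    intervalIntegral.integral_const, smul_eq_mul, smul_eq_mul]
  have hfinal1 : (1/3 - 0) * (3 * (1 - ε) * (4 / Real.sqrt n) * qdet g a₀)
      ≤ 4 / Real.sqrt n * qdet g a₀ := by
    have h40 : 0 < 4 / Real.sqrt n := by positivity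
    nlinarith [mul_pos h40 hQ₀, mul_pos (mul_pos hε0 h40) hQ₀]
  have hfinal3 : (1 - 2/3) * (3 * (1 - ε) * (4 / Real.sqrt n) * qdet g a₁)
      ≤ 4 / Real.sqrt n * qdet g a₁ := by
    have h40 : 0 < 4 / Real.sqrt n := by positivity
    nlinarith [mul_pos h40 hQ₁, mul_pos (mul_pos hε0 h40) hQ₁]
  have := add_le_add (add_le_add hfinal1 hmid) hfinal3
  calc (1/3 - 0) * (3 * (1 - ε) * (4 / Real.sqrt n) * qdet g a₀)
        + (∫ t in (1/3:ℝ)..(2/3), ε * F t)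
        + (1 - 2/3) * (3 * (1 - ε) * (4 / Real.sqrt n) * qdet g a₁)
      ≤ 4 / Real.sqrt n * qdet g a₀ + ε * M * (1/3) + 4 / Real.sqrt n * qdet g a₁ := this
    _ ≤ 4 / Real.sqrt n * (qdet g a₀ + qdet g a₁) + δ := by linarith [hεM]

end
end
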